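/- Under the standing assumptions on the loss functions R_1,...,R_m (each R_{ab} minimal exactly on [L_{ab},U_{ab}], strictly decreasing before and strictly increasing after), a vector x in the isotone cone ℝ^m_↑ = {x : x_1 ≤ ... ≤ x_m} minimizes T(x) = Σ_j R_j(x_j) over ℝ^m_↑ if and only if for all indices 1 ≤ a ≤ b ≤ m: x_a ≤ U_{ab} whenever x_{a-1} < x_a, and x_b ≥ L_{ab} whenever x_b < x_{b+1} (with the conventions x_0 = -∞, x_{m+1} = +∞). -/
import Mathlib

open scoped Classical
set_option linter.unusedSectionVars false

noncomputable def fsum (R : ℕ → ℝ → ℝ) (a b : ℕ) (q : ℝ) : ℝ := ∑ j ∈ Finset.Icc a b, R j q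

lemma fsum_split (R : ℕ → ℝ → ℝ) {a c b : ℕ} (hac : a ≤ c) (hcb : c ≤ b) (q : ℝ) :
    fsum R a b q = fsum R a c q + fsum R (c+1) b q := by
  unfold fsum
  rw [← Finset.Ico_add_one_right_eq_Icc, ← Finset.Ico_add_one_right_eq_Icc, ← Finset.Ico_add_one_right_eq_Icc,
    ← Finset.sum_Ico_consecutive (fun j => R j q) (by omega : a ≤ c + 1) (by omega : c + 1 ≤ b + 1)]

section hyp
variable (m : ℕ) (R : ℕ → ℝ → ℝ) (L U : ℕ → ℕ → ℝ)
variable (hLU : ∀ a b, 1 ≤ a → a ≤ b → b ≤ m → L a b ≤ U a b)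
variable (hmin : ∀ a b, 1 ≤ a → a ≤ b → b ≤ m → ∀ q : ℝ,
      (∀ r : ℝ, (∑ j ∈ Finset.Icc a b, R j q) ≤ ∑ j ∈ Finset.Icc a b, R j r) ↔
        q ∈ Set.Icc (L a b) (U a b))
variable (hanti : ∀ a b, 1 ≤ a → a ≤ b → b ≤ m →
      StrictAntiOn (fun q => ∑ j ∈ Finset.Icc a b, R j q) (Set.Iic (L a b)))
variable (hmono : ∀ a b, 1 ≤ a → a ≤ b → b ≤ m →
      StrictMonoOn (fun q => ∑ j ∈ Finset.Icc a b, R j q) (Set.Ici (U a b)))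

include hLU hmin hanti in
/-- `fsum` is nonincreasing up to `U a b`. -/
lemma nonincr {a b : ℕ} (ha : 1 ≤ a) (hab : a ≤ b) (hbm : b ≤ m) {r s : ℝ}
    (hrs : r ≤ s) (hsU : s ≤ U a b) : fsum R a b s ≤ fsum R a b r := by
  rcases le_or_gt s (L a b) with hsL | hsL
  · rcases eq_or_lt_of_le hrs with h | h
    · simp [h]
    · exact le_of_lt (hanti a b ha hab hbm (le_trans hrs hsL) hsL h)
  · exact (hmin a b ha hab hbm s).mpr ⟨le_of_lt hsL, hsU⟩ r

include hLU hmin hmono in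
/-- `fsum` is nondecreasing from `L a b` on. -/
lemma nondecr {a b : ℕ} (ha : 1 ≤ a) (hab : a ≤ b) (hbm : b ≤ m) {r s : ℝ}
    (hLr : L a b ≤ r) (hrs : r ≤ s) : fsum R a b r ≤ fsum R a b s := by
  rcases le_or_gt (U a b) r with hrU | hrU
  · rcases eq_or_lt_of_le hrs with h | h
    · simp [h]
    · exact le_of_lt (hmono a b ha hab hbm hrU (le_trans hrU (le_of_lt h)) h)
  · exact (hmin a b ha hab hbm r).mpr ⟨hLr, le_of_lt hrU⟩ s

include hLU hmin hanti hmono in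
lemma lemA {a c b : ℕ} (ha : 1 ≤ a) (hac : a ≤ c) (hcb : c < b) (hbm : b ≤ m) {q : ℝ}
    (h1 : q ≤ U a c) (h2 : q ≤ U (c+1) b) : q ≤ U a b := by
  by_contra hq
  push_neg at hq
  have hab : a ≤ b := le_trans hac (le_of_lt hcb)
  have hlt : fsum R a b (U a b) < fsum R a b q :=
    hmono a b ha hab hbm Set.self_mem_Ici (Set.mem_Ici.mpr (le_of_lt hq)) hq
  have e1 : fsum R a c q ≤ fsum R a c (U a b) :=
    nonincr m R L U hLU hmin hanti ha hac (le_trans (le_of_lt hcb) hbm) (le_of_lt hq) h1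
  have e2 : fsum R (c+1) b q ≤ fsum R (c+1) b (U a b) :=
    nonincr m R L U hLU hmin hanti (by omega) hcb hbm (le_of_lt hq) h2
  rw [fsum_split R hac (le_of_lt hcb) q, fsum_split R hac (le_of_lt hcb) (U a b)] at hlt
  linarith

include hLU hmin hanti hmono in
lemma lemA' {a c b : ℕ} (ha : 1 ≤ a) (hac : a ≤ c) (hcb : c < b) (hbm : b ≤ m) {q : ℝ}
    (h1 : L a c ≤ q) (h2 : L (c+1) b ≤ q) : L a b ≤ q := by
  by_contra hq
  push_neg at hq
  have hab : a ≤ b := le_trans hac (le_of_lt hcb)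
  have hlt : fsum R a b (L a b) < fsum R a b q :=
    hanti a b ha hab hbm (Set.mem_Iic.mpr (le_of_lt hq)) Set.self_mem_Iic hq
  have e1 : fsum R a c q ≤ fsum R a c (L a b) :=
    nondecr m R L U hLU hmin hmono ha hac (le_trans (le_of_lt hcb) hbm) h1 (le_of_lt hq)
  have e2 : fsum R (c+1) b q ≤ fsum R (c+1) b (L a b) :=
    nondecr m R L U hLU hmin hmono (by omega) hcb hbm h2 (le_of_lt hq)
  rw [fsum_split R hac (le_of_lt hcb) q, fsum_split R hac (le_of_lt hcb) (L a b)] at hlt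
  linarith

end hyp

/-- swap identity for sums agreeing off a subinterval -/
lemma Tswap (m : ℕ) (R : ℕ → ℝ → ℝ) {a b : ℕ} (x y : ℕ → ℝ)
    (hsub : Finset.Icc a b ⊆ Finset.Icc 1 m)
    (hagree : ∀ j ∈ Finset.Icc 1 m, j ∉ Finset.Icc a b → y j = x j) :
    (∑ j ∈ Finset.Icc 1 m, R j (y j)) + ∑ j ∈ Finset.Icc a b, R j (x j)
      = (∑ j ∈ Finset.Icc 1 m, R j (x j)) + ∑ j ∈ Finset.Icc a b, R j (y j) := by
  have hy : (∑ j ∈ Finset.Icc 1 m, R j (y j))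
      = (∑ j ∈ Finset.Icc 1 m \ Finset.Icc a b, R j (y j)) + ∑ j ∈ Finset.Icc a b, R j (y j) :=
    (Finset.sum_sdiff hsub).symm
  have hx : (∑ j ∈ Finset.Icc 1 m, R j (x j))
      = (∑ j ∈ Finset.Icc 1 m \ Finset.Icc a b, R j (x j)) + ∑ j ∈ Finset.Icc a b, R j (x j) :=
    (Finset.sum_sdiff hsub).symm
  have hc : (∑ j ∈ Finset.Icc 1 m \ Finset.Icc a b, R j (y j))
      = ∑ j ∈ Finset.Icc 1 m \ Finset.Icc a b, R j (x j) := by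
    refine Finset.sum_congr rfl (fun j hj => ?_)
    rw [Finset.mem_sdiff] at hj
    rw [hagree j hj.1 hj.2]
  rw [hy, hx, hc]; ring
section hyp2
variable (m : ℕ) (R : ℕ → ℝ → ℝ) (L U : ℕ → ℕ → ℝ)
variable (hLU : ∀ a b, 1 ≤ a → a ≤ b → b ≤ m → L a b ≤ U a b)
variable (hmin : ∀ a b, 1 ≤ a → a ≤ b → b ≤ m → ∀ q : ℝ,
      (∀ r : ℝ, (∑ j ∈ Finset.Icc a b, R j q) ≤ ∑ j ∈ Finset.Icc a b, R j r) ↔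
        q ∈ Set.Icc (L a b) (U a b))
variable (hanti : ∀ a b, 1 ≤ a → a ≤ b → b ≤ m →
      StrictAntiOn (fun q => ∑ j ∈ Finset.Icc a b, R j q) (Set.Iic (L a b)))
variable (hmono : ∀ a b, 1 ≤ a → a ≤ b → b ≤ m →
      StrictMonoOn (fun q => ∑ j ∈ Finset.Icc a b, R j q) (Set.Ici (U a b)))
variable (x : ℕ → ℝ) (hx : MonotoneOn x (Set.Icc 1 m))
variable (hopt : ∀ y : ℕ → ℝ, MonotoneOn y (Set.Icc 1 m) →
        (∑ j ∈ Finset.Icc 1 m, R j (x j)) ≤ ∑ j ∈ Finset.Icc 1 m, R j (y j))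

include hmono x hx hopt in
/-- a constant block starting freely can be pushed down: its value is `≤ U a b`. -/
lemma lemC {a b : ℕ} (ha : 1 ≤ a) (hab : a ≤ b) (hbm : b ≤ m)
    (hconst : ∀ j ∈ Finset.Icc a b, x j = x a)
    (gate : a = 1 ∨ x (a - 1) < x a) : x a ≤ U a b := by
  by_contra hU
  push_neg at hU
  set t : ℝ := if a = 1 then U a b else max (U a b) (x (a-1)) with ht
  have ht1 : U a b ≤ t := by
    rcases eq_or_ne a 1 with h | h
    · simp [ht, h]
    · simp only [ht, if_neg h]; exact le_max_left _ _
  have ht2 : t < x a := by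
    rcases eq_or_ne a 1 with h | h
    · simpa [ht, h] using hU
    · have hg : x (a-1) < x a := gate.resolve_left h
      simp only [ht, if_neg h]; exact max_lt hU hg
  have ht3 : a ≠ 1 → x (a-1) ≤ t := by
    intro h; simp only [ht, if_neg h]; exact le_max_right _ _
  set y : ℕ → ℝ := fun j => if a ≤ j ∧ j ≤ b then t else x j with hy
  have hysub : Finset.Icc a b ⊆ Finset.Icc 1 m := by
    intro j hj; rw [Finset.mem_Icc] at *; omega
  have hymono : MonotoneOn y (Set.Icc 1 m) := by
    intro i hi j hj hij
    simp only [Set.mem_Icc] at hi hj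
    by_cases hiI : a ≤ i ∧ i ≤ b <;> by_cases hjI : a ≤ j ∧ j ≤ b
    · simp [hy, hiI, hjI]
    · -- i in the block, j after it
      have hjb : b < j := by omega
      simp only [hy, if_pos hiI, if_neg hjI]
      have hxa : x a ≤ x j := hx (Set.mem_Icc.mpr ⟨ha, by omega⟩) (Set.mem_Icc.mpr hj) (by omega)
      linarith
    · -- i before the block
      have hia : i < a := by omega
      have h1 : a ≠ 1 := by omega
      simp only [hy, if_neg hiI, if_pos hjI]
      have : x i ≤ x (a-1) := hx (Set.mem_Icc.mpr hi) (Set.mem_Icc.mpr ⟨by omega, by omega⟩) (by omega)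
      exact le_trans this (ht3 h1)
    · simp only [hy, if_neg hiI, if_neg hjI]
      exact hx (Set.mem_Icc.mpr hi) (Set.mem_Icc.mpr hj) hij
  have hswap := Tswap m R x y hysub (by
    intro j _ hj2; simp only [hy]; rw [if_neg (by rwa [Finset.mem_Icc] at hj2)])
  have hxs : (∑ j ∈ Finset.Icc a b, R j (x j)) = fsum R a b (x a) := by
    exact Finset.sum_congr rfl (fun j hj => by rw [hconst j hj])
  have hys : (∑ j ∈ Finset.Icc a b, R j (y j)) = fsum R a b t := by
    refine Finset.sum_congr rfl (fun j hj => ?_)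
    rw [Finset.mem_Icc] at hj; simp [hy, hj.1, hj.2]
  have hto := hopt y hymono
  have hstrict : fsum R a b t < fsum R a b (x a) :=
    hmono a b ha hab hbm (Set.mem_Ici.mpr ht1) (Set.mem_Ici.mpr (le_trans ht1 (le_of_lt ht2))) ht2
  rw [hxs, hys] at hswap
  linarith

include hanti x hx hopt in
lemma lemC' {a b : ℕ} (ha : 1 ≤ a) (hab : a ≤ b) (hbm : b ≤ m)
    (hconst : ∀ j ∈ Finset.Icc a b, x j = x b)
    (gate : b = m ∨ x b < x (b + 1)) : L a b ≤ x b := by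
  by_contra hL
  push_neg at hL
  set t : ℝ := if b = m then L a b else min (L a b) (x (b+1)) with ht
  have ht1 : t ≤ L a b := by
    rcases eq_or_ne b m with h | h
    · simp [ht, h]
    · simp only [ht, if_neg h]; exact min_le_left _ _
  have ht2 : x b < t := by
    rcases eq_or_ne b m with h | h
    · simpa [ht, h] using hL
    · have hg : x b < x (b+1) := gate.resolve_left h
      simp only [ht, if_neg h]; exact lt_min hL hg
  have ht3 : b ≠ m → t ≤ x (b+1) := by
    intro h; simp only [ht, if_neg h]; exact min_le_right _ _
  set y : ℕ → ℝ := fun j => if a ≤ j ∧ j ≤ b then t else x j with hy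
  have hysub : Finset.Icc a b ⊆ Finset.Icc 1 m := by
    intro j hj; rw [Finset.mem_Icc] at *; omega
  have hymono : MonotoneOn y (Set.Icc 1 m) := by
    intro i hi j hj hij
    simp only [Set.mem_Icc] at hi hj
    by_cases hiI : a ≤ i ∧ i ≤ b <;> by_cases hjI : a ≤ j ∧ j ≤ b
    · simp [hy, hiI, hjI]
    · -- i in the block, j after it
      have hjb : b < j := by omega
      have hbm' : b ≠ m := by omega
      simp only [hy, if_pos hiI, if_neg hjI]
      have hxa : x (b+1) ≤ x j :=
        hx (Set.mem_Icc.mpr ⟨by omega, by omega⟩) (Set.mem_Icc.mpr hj) (by omega)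
      have := ht3 hbm'
      linarith
    · -- i before the block
      have hia : i < a := by omega
      simp only [hy, if_neg hiI, if_pos hjI]
      have h1 : x i ≤ x b := hx (Set.mem_Icc.mpr hi) (Set.mem_Icc.mpr ⟨by omega, hbm⟩) (by omega)
      linarith
    · simp only [hy, if_neg hiI, if_neg hjI]
      exact hx (Set.mem_Icc.mpr hi) (Set.mem_Icc.mpr hj) hij
  have hswap := Tswap m R x y hysub (by
    intro j _ hj2; simp only [hy]; rw [if_neg (by rwa [Finset.mem_Icc] at hj2)])
  have hxs : (∑ j ∈ Finset.Icc a b, R j (x j)) = fsum R a b (x b) := by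
    exact Finset.sum_congr rfl (fun j hj => by rw [hconst j hj])
  have hys : (∑ j ∈ Finset.Icc a b, R j (y j)) = fsum R a b t := by
    refine Finset.sum_congr rfl (fun j hj => ?_)
    rw [Finset.mem_Icc] at hj; simp [hy, hj.1, hj.2]
  have hto := hopt y hymono
  have hstrict : fsum R a b t < fsum R a b (x b) :=
    hanti a b ha hab hbm (Set.mem_Iic.mpr (le_trans (le_of_lt ht2) ht1))
      (Set.mem_Iic.mpr ht1) ht2
  rw [hxs, hys] at hswap
  linarith

end hyp2
section hyp3
variable (m : ℕ) (R : ℕ → ℝ → ℝ) (L U : ℕ → ℕ → ℝ)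
variable (hLU : ∀ a b, 1 ≤ a → a ≤ b → b ≤ m → L a b ≤ U a b)
variable (hmin : ∀ a b, 1 ≤ a → a ≤ b → b ≤ m → ∀ q : ℝ,
      (∀ r : ℝ, (∑ j ∈ Finset.Icc a b, R j q) ≤ ∑ j ∈ Finset.Icc a b, R j r) ↔
        q ∈ Set.Icc (L a b) (U a b))
variable (hanti : ∀ a b, 1 ≤ a → a ≤ b → b ≤ m →
      StrictAntiOn (fun q => ∑ j ∈ Finset.Icc a b, R j q) (Set.Iic (L a b)))
variable (hmono : ∀ a b, 1 ≤ a → a ≤ b → b ≤ m →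
      StrictMonoOn (fun q => ∑ j ∈ Finset.Icc a b, R j q) (Set.Ici (U a b)))
variable (x : ℕ → ℝ) (hx : MonotoneOn x (Set.Icc 1 m))
variable (hopt : ∀ y : ℕ → ℝ, MonotoneOn y (Set.Icc 1 m) →
        (∑ j ∈ Finset.Icc 1 m, R j (x j)) ≤ ∑ j ∈ Finset.Icc 1 m, R j (y j))

include hLU hmin hanti hmono hx hopt in
lemma forwardU : ∀ n : ℕ, ∀ a b : ℕ, 1 ≤ a → a ≤ b → b ≤ m → b - a ≤ n →
    (a = 1 ∨ x (a - 1) < x a) → x a ≤ U a b := by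
  intro n
  induction n with
  | zero =>
    intro a b ha hab hbm hn gate
    have hba : b = a := by omega
    subst hba
    exact lemC m R U hmono x hx hopt ha hab hbm
      (fun j hj => by rw [Finset.mem_Icc] at hj; congr 1; omega) gate
  | succ n IH =>
    intro a b ha hab hbm hn gate
    by_cases hcb : x b ≤ x a
    · refine lemC m R U hmono x hx hopt ha hab hbm (fun j hj => ?_) gate
      rw [Finset.mem_Icc] at hj
      have h1 : x a ≤ x j := hx (Set.mem_Icc.mpr ⟨ha, by omega⟩)
        (Set.mem_Icc.mpr ⟨by omega, by omega⟩) hj.1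
      have h2 : x j ≤ x b := hx (Set.mem_Icc.mpr ⟨by omega, by omega⟩)
        (Set.mem_Icc.mpr ⟨by omega, hbm⟩) hj.2
      linarith
    · push_neg at hcb
      set F : Finset ℕ := (Finset.Icc a b).filter (fun j => x j = x a) with hF
      have haF : a ∈ F := by
        rw [hF, Finset.mem_filter, Finset.mem_Icc]; exact ⟨⟨le_refl _, hab⟩, rfl⟩
      set c := F.max' ⟨a, haF⟩ with hc
      have hcF : c ∈ F := Finset.max'_mem _ _
      rw [hF, Finset.mem_filter, Finset.mem_Icc] at hcF
      obtain ⟨⟨hac, hcbb⟩, hxc⟩ := hcF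
      have hcb' : c < b := by
        rcases lt_or_eq_of_le hcbb with h | h
        · exact h
        · exfalso; rw [h] at hxc; linarith
      have hxc1 : x a < x (c+1) := by
        have h1 : x c ≤ x (c+1) := hx (Set.mem_Icc.mpr ⟨by omega, by omega⟩)
          (Set.mem_Icc.mpr ⟨by omega, by omega⟩) (by omega)
        rcases lt_or_eq_of_le h1 with h | h
        · rw [← hxc]; exact h
        · exfalso
          have : c + 1 ∈ F := by
            rw [hF, Finset.mem_filter, Finset.mem_Icc]
            exact ⟨⟨by omega, by omega⟩, by rw [← h, hxc]⟩
          have := Finset.le_max' F (c+1) this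
          rw [← hc] at this; omega
      have h1 : x a ≤ U a c := by
        refine lemC m R U hmono x hx hopt ha hac (by omega) (fun j hj => ?_) gate
        rw [Finset.mem_Icc] at hj
        have e1 : x a ≤ x j := hx (Set.mem_Icc.mpr ⟨ha, by omega⟩)
          (Set.mem_Icc.mpr ⟨by omega, by omega⟩) hj.1
        have e2 : x j ≤ x c := hx (Set.mem_Icc.mpr ⟨by omega, by omega⟩)
          (Set.mem_Icc.mpr ⟨by omega, by omega⟩) hj.2
        linarith
      have h2 : x (c+1) ≤ U (c+1) b := by
        refine IH (c+1) b (by omega) (by omega) hbm (by omega) (Or.inr ?_)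
        simp only [Nat.add_sub_cancel]
        rw [hxc]; exact hxc1
      exact lemA m R L U hLU hmin hanti hmono ha hac hcb' hbm h1
        (le_trans (le_of_lt hxc1) h2)

include hLU hmin hanti hmono hx hopt in
lemma forwardL : ∀ n : ℕ, ∀ a b : ℕ, 1 ≤ a → a ≤ b → b ≤ m → b - a ≤ n →
    (b = m ∨ x b < x (b + 1)) → L a b ≤ x b := by
  intro n
  induction n with
  | zero =>
    intro a b ha hab hbm hn gate
    have hba : b = a := by omega
    subst hba
    exact lemC' m R L hanti x hx hopt ha hab hbm
      (fun j hj => by rw [Finset.mem_Icc] at hj; congr 1; omega) gate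
  | succ n IH =>
    intro a b ha hab hbm hn gate
    by_cases hcb : x b ≤ x a
    · refine lemC' m R L hanti x hx hopt ha hab hbm (fun j hj => ?_) gate
      rw [Finset.mem_Icc] at hj
      have h1 : x a ≤ x j := hx (Set.mem_Icc.mpr ⟨ha, by omega⟩)
        (Set.mem_Icc.mpr ⟨by omega, by omega⟩) hj.1
      have h2 : x j ≤ x b := hx (Set.mem_Icc.mpr ⟨by omega, by omega⟩)
        (Set.mem_Icc.mpr ⟨by omega, hbm⟩) hj.2
      linarith
    · push_neg at hcb
      set F : Finset ℕ := (Finset.Icc a b).filter (fun j => x j = x b) with hF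
      have hbF : b ∈ F := by
        rw [hF, Finset.mem_filter, Finset.mem_Icc]; exact ⟨⟨hab, le_refl _⟩, rfl⟩
      set c := F.min' ⟨b, hbF⟩ with hc
      have hcF : c ∈ F := Finset.min'_mem _ _
      rw [hF, Finset.mem_filter, Finset.mem_Icc] at hcF
      obtain ⟨⟨hac, hcbb⟩, hxc⟩ := hcF
      have hca : a < c := by
        rcases lt_or_eq_of_le hac with h | h
        · exact h
        · exfalso; rw [← h] at hxc; linarith
      have hxc1 : x (c-1) < x b := by
        have h1 : x (c-1) ≤ x c := hx (Set.mem_Icc.mpr ⟨by omega, by omega⟩)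
          (Set.mem_Icc.mpr ⟨by omega, by omega⟩) (by omega)
        rcases lt_or_eq_of_le h1 with h | h
        · rw [← hxc]; exact h
        · exfalso
          have : c - 1 ∈ F := by
            rw [hF, Finset.mem_filter, Finset.mem_Icc]
            exact ⟨⟨by omega, by omega⟩, by rw [h, hxc]⟩
          have := Finset.min'_le F (c-1) this
          rw [← hc] at this; omega
      have h1 : L c b ≤ x b := by
        refine lemC' m R L hanti x hx hopt (by omega) hcbb hbm (fun j hj => ?_) gate
        rw [Finset.mem_Icc] at hj
        have e1 : x c ≤ x j := hx (Set.mem_Icc.mpr ⟨by omega, by omega⟩)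
          (Set.mem_Icc.mpr ⟨by omega, by omega⟩) hj.1
        have e2 : x j ≤ x b := hx (Set.mem_Icc.mpr ⟨by omega, by omega⟩)
          (Set.mem_Icc.mpr ⟨by omega, hbm⟩) hj.2
        linarith
      have h2 : L a (c-1) ≤ x (c-1) := by
        refine IH a (c-1) ha (by omega) (by omega) (by omega) (Or.inr ?_)
        have hcc : c - 1 + 1 = c := by omega
        rw [hcc, hxc]; exact hxc1
      have hsplit : L a b ≤ x b := by
        exact lemA' m R L U hLU hmin hanti hmono (a := a) (c := c-1) (b := b)
          ha (by omega) (by omega) hbm (q := x b)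
          (le_trans h2 (le_of_lt hxc1)) (by rw [(by omega : c - 1 + 1 = c)]; exact h1)
      exact hsplit

end hyp3
noncomputable def Sset (m : ℕ) (x y : ℕ → ℝ) : Finset ℕ :=
  (Finset.Icc 1 m).filter (fun j => y j < x j)

lemma mem_Sset {m : ℕ} {x y : ℕ → ℝ} {j : ℕ} :
    j ∈ Sset m x y ↔ (1 ≤ j ∧ j ≤ m) ∧ y j < x j := by
  unfold Sset
  rw [Finset.mem_filter, Finset.mem_Icc]

noncomputable def pend (m : ℕ) (x y : ℕ → ℝ) : ℕ :=
  if h : (Sset m x y).Nonempty then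
    ((Finset.Icc ((Sset m x y).min' h) m).filter (fun j => y j = y ((Sset m x y).min' h))).max'
      ⟨(Sset m x y).min' h, by
        refine Finset.mem_filter.2 ⟨Finset.mem_Icc.2 ⟨le_refl _, ?_⟩, rfl⟩
        exact (mem_Sset.mp ((Sset m x y).min'_mem h)).1.2⟩
  else 0

lemma sum_eq_of_Sempty (m : ℕ) (R : ℕ → ℝ → ℝ) (x y : ℕ → ℝ)
    (hyx : ∀ j, 1 ≤ j → j ≤ m → y j ≤ x j) (hS : Sset m x y = ∅) :
    ∑ j ∈ Finset.Icc 1 m, R j (x j) = ∑ j ∈ Finset.Icc 1 m, R j (y j) := by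
  refine Finset.sum_congr rfl fun j hj => ?_
  rw [Finset.mem_Icc] at hj
  have h1 : j ∉ Sset m x y := by rw [hS]; exact Finset.notMem_empty j
  have h2 : ¬ (y j < x j) := fun hc => h1 (mem_Sset.mpr ⟨⟨hj.1, hj.2⟩, hc⟩)
  congr 1
  exact le_antisymm (not_lt.1 h2) (hyx j hj.1 hj.2)

section hyp4
variable (m : ℕ) (R : ℕ → ℝ → ℝ) (L U : ℕ → ℕ → ℝ)
variable (hLU : ∀ a b, 1 ≤ a → a ≤ b → b ≤ m → L a b ≤ U a b)
variable (hmin : ∀ a b, 1 ≤ a → a ≤ b → b ≤ m → ∀ q : ℝ,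
      (∀ r : ℝ, (∑ j ∈ Finset.Icc a b, R j q) ≤ ∑ j ∈ Finset.Icc a b, R j r) ↔
        q ∈ Set.Icc (L a b) (U a b))
variable (hanti : ∀ a b, 1 ≤ a → a ≤ b → b ≤ m →
      StrictAntiOn (fun q => ∑ j ∈ Finset.Icc a b, R j q) (Set.Iic (L a b)))
variable (hmono : ∀ a b, 1 ≤ a → a ≤ b → b ≤ m →
      StrictMonoOn (fun q => ∑ j ∈ Finset.Icc a b, R j q) (Set.Ici (U a b)))
variable (x : ℕ → ℝ) (hx : MonotoneOn x (Set.Icc 1 m))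

include hLU hmin hanti hx in
lemma lemB (hU : ∀ a b, 1 ≤ a → a ≤ b → b ≤ m → (a = 1 ∨ x (a-1) < x a) → x a ≤ U a b) :
    ∀ N : ℕ, ∀ y : ℕ → ℝ, MonotoneOn y (Set.Icc 1 m) → (∀ j, 1 ≤ j → j ≤ m → y j ≤ x j) →
    (Sset m x y).card * (m+1) + (m - pend m x y) ≤ N →
    ∑ j ∈ Finset.Icc 1 m, R j (x j) ≤ ∑ j ∈ Finset.Icc 1 m, R j (y j) := by
  intro N
  induction N with
  | zero =>
    intro y hy hyx hmeas
    have h2 : (Sset m x y).card * (m+1) = 0 :=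
      Nat.eq_zero_of_le_zero (le_trans (Nat.le_add_right _ _) hmeas)
    rcases Nat.mul_eq_zero.mp h2 with h3 | h3
    · exact le_of_eq (sum_eq_of_Sempty m R x y hyx (Finset.card_eq_zero.mp h3))
    · omega
  | succ N IH =>
    intro y hy hyx hmeas
    by_cases hS : (Sset m x y).Nonempty
    swap
    · exact le_of_eq (sum_eq_of_Sempty m R x y hyx (Finset.not_nonempty_iff_eq_empty.mp hS))
    set a := (Sset m x y).min' hS with hadef
    have haS : a ∈ Sset m x y := (Sset m x y).min'_mem hS
    obtain ⟨⟨ha1, ham⟩, hax⟩ := mem_Sset.mp haS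
    set F := (Finset.Icc a m).filter (fun j => y j = y a) with hFdef
    have haF : a ∈ F := by
      rw [hFdef, Finset.mem_filter, Finset.mem_Icc]; exact ⟨⟨le_refl _, ham⟩, rfl⟩
    set p := F.max' ⟨a, haF⟩ with hpdef
    have hpF : p ∈ F := F.max'_mem _
    rw [hFdef, Finset.mem_filter, Finset.mem_Icc] at hpF
    obtain ⟨⟨hap, hpm⟩, hypa⟩ := hpF
    have hpend : pend m x y = p := by
      unfold pend
      rw [dif_pos hS]
    have hrun : ∀ j, a ≤ j → j ≤ p → y j = y a := by
      intro j hj1 hj2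
      have e1 : y a ≤ y j := hy (Set.mem_Icc.mpr ⟨ha1, ham⟩)
        (Set.mem_Icc.mpr ⟨by omega, by omega⟩) hj1
      have e2 : y j ≤ y p := hy (Set.mem_Icc.mpr ⟨by omega, by omega⟩)
        (Set.mem_Icc.mpr ⟨by omega, hpm⟩) hj2
      rw [hypa] at e2; linarith
    have hrunS : ∀ j, a ≤ j → j ≤ p → j ∈ Sset m x y := by
      intro j hj1 hj2
      refine mem_Sset.mpr ⟨⟨by omega, by omega⟩, ?_⟩
      have e1 : x a ≤ x j := hx (Set.mem_Icc.mpr ⟨ha1, ham⟩)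
        (Set.mem_Icc.mpr ⟨by omega, by omega⟩) hj1
      rw [hrun j hj1 hj2]; linarith
    have hyp1 : p < m → y a < y (p+1) := by
      intro hpm'
      have e1 : y p ≤ y (p+1) := hy (Set.mem_Icc.mpr ⟨by omega, by omega⟩)
        (Set.mem_Icc.mpr ⟨by omega, by omega⟩) (by omega)
      rcases lt_or_eq_of_le e1 with h | h
      · rw [hypa] at h; exact h
      · exfalso
        have hmem : p + 1 ∈ F := by
          rw [hFdef, Finset.mem_filter, Finset.mem_Icc]
          exact ⟨⟨by omega, by omega⟩, by rw [← h, hypa]⟩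
        have := Finset.le_max' F (p+1) hmem
        rw [← hpdef] at this; omega
    have gate : a = 1 ∨ x (a-1) < x a := by
      rcases eq_or_ne a 1 with h | h
      · exact Or.inl h
      · right
        have h2 : a - 1 ∉ Sset m x y := by
          intro hc
          have := (Sset m x y).min'_le _ hc
          rw [← hadef] at this; omega
        have h3 : ¬ (y (a-1) < x (a-1)) := fun hc => h2 (mem_Sset.mpr ⟨⟨by omega, by omega⟩, hc⟩)
        have h4 : y (a-1) ≤ x (a-1) := hyx _ (by omega) (by omega)
        have h5 : x (a-1) = y (a-1) := le_antisymm (not_lt.1 h3) h4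
        have h6 : y (a-1) ≤ y a := hy (Set.mem_Icc.mpr ⟨by omega, by omega⟩)
          (Set.mem_Icc.mpr ⟨ha1, ham⟩) (by omega)
        rw [h5]; linarith
    have hUa : x a ≤ U a p := hU a p ha1 hap hpm gate
    set t : ℝ := if p < m ∧ y (p+1) < x a then y (p+1) else x a with htdef
    have ht2 : t ≤ x a := by
      by_cases h : p < m ∧ y (p+1) < x a
      · rw [htdef, if_pos h]; exact le_of_lt h.2
      · rw [htdef, if_neg h]
    have ht1 : y a < t := by
      by_cases h : p < m ∧ y (p+1) < x a
      · rw [htdef, if_pos h]; exact hyp1 h.1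
      · rw [htdef, if_neg h]; exact hax
    have ht3 : p < m → t ≤ y (p+1) := by
      intro hpm'
      by_cases h : p < m ∧ y (p+1) < x a
      · rw [htdef, if_pos h]
      · rw [htdef, if_neg h]
        push_neg at h
        exact h hpm'
    set y' : ℕ → ℝ := fun j => if a ≤ j ∧ j ≤ p then t else y j with hy'def
    have hy'run : ∀ j, a ≤ j → j ≤ p → y' j = t := by
      intro j h1 h2; rw [hy'def]; exact if_pos ⟨h1, h2⟩
    have hy'out : ∀ j, ¬(a ≤ j ∧ j ≤ p) → y' j = y j := by
      intro j h; rw [hy'def]; exact if_neg h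
    have hy'mono : MonotoneOn y' (Set.Icc 1 m) := by
      intro i hi j hj hij
      simp only [Set.mem_Icc] at hi hj
      by_cases hiI : a ≤ i ∧ i ≤ p <;> by_cases hjI : a ≤ j ∧ j ≤ p
      · rw [hy'run i hiI.1 hiI.2, hy'run j hjI.1 hjI.2]
      · have hjp : p < j := by omega
        rw [hy'run i hiI.1 hiI.2, hy'out j hjI]
        have e1 : y (p+1) ≤ y j := hy (Set.mem_Icc.mpr ⟨by omega, by omega⟩)
          (Set.mem_Icc.mpr hj) (by omega)
        have := ht3 (by omega)
        linarith
      · have hia : i < a := by omega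
        rw [hy'out i hiI, hy'run j hjI.1 hjI.2]
        have e1 : y i ≤ y a := hy (Set.mem_Icc.mpr hi)
          (Set.mem_Icc.mpr ⟨ha1, ham⟩) (by omega)
        linarith
      · rw [hy'out i hiI, hy'out j hjI]
        exact hy (Set.mem_Icc.mpr hi) (Set.mem_Icc.mpr hj) hij
    have hy'x : ∀ j, 1 ≤ j → j ≤ m → y' j ≤ x j := by
      intro j h1 h2
      by_cases h : a ≤ j ∧ j ≤ p
      · rw [hy'run j h.1 h.2]
        exact le_trans ht2 (hx (Set.mem_Icc.mpr ⟨ha1, ham⟩) (Set.mem_Icc.mpr ⟨h1, h2⟩) h.1)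
      · rw [hy'out j h]; exact hyx j h1 h2
    have hstep : (∑ j ∈ Finset.Icc 1 m, R j (y' j)) ≤ ∑ j ∈ Finset.Icc 1 m, R j (y j) := by
      have hsub : Finset.Icc a p ⊆ Finset.Icc 1 m := by
        intro j hj; rw [Finset.mem_Icc] at *; omega
      have hswap := Tswap m R y y' hsub (fun j _ hj2 =>
        hy'out j (by rwa [Finset.mem_Icc] at hj2))
      have e1 : (∑ j ∈ Finset.Icc a p, R j (y j)) = fsum R a p (y a) := by
        refine Finset.sum_congr rfl fun j hj => ?_
        rw [Finset.mem_Icc] at hj; rw [hrun j hj.1 hj.2]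
      have e2 : (∑ j ∈ Finset.Icc a p, R j (y' j)) = fsum R a p t := by
        refine Finset.sum_congr rfl fun j hj => ?_
        rw [Finset.mem_Icc] at hj; rw [hy'run j hj.1 hj.2]
      have e3 : fsum R a p t ≤ fsum R a p (y a) :=
        nonincr m R L U hLU hmin hanti ha1 hap hpm (le_of_lt ht1) (le_trans ht2 hUa)
      rw [e1, e2] at hswap
      linarith
    have hfinal : (Sset m x y').card * (m+1) + (m - pend m x y') ≤ N := by
      by_cases hcase : p < m ∧ y (p+1) < x a
      · -- run extends to the right: S unchanged, pend grows
        have hSeq : Sset m x y' = Sset m x y := by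
          ext j
          by_cases h : a ≤ j ∧ j ≤ p
          · have hjy : j ∈ Sset m x y := hrunS j h.1 h.2
            have hjy' : j ∈ Sset m x y' := by
              refine mem_Sset.mpr ⟨⟨by omega, by omega⟩, ?_⟩
              rw [hy'run j h.1 h.2, htdef, if_pos hcase]
              have e1 : x a ≤ x j := hx (Set.mem_Icc.mpr ⟨ha1, ham⟩)
                (Set.mem_Icc.mpr ⟨by omega, by omega⟩) h.1
              linarith [hcase.2]
            exact iff_of_true hjy' hjy
          · rw [mem_Sset, mem_Sset, hy'out j h]
        have hS'ne : (Sset m x y').Nonempty := ⟨a, by rw [hSeq]; exact haS⟩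
        have ha'eq : (Sset m x y').min' hS'ne = a := by
          apply le_antisymm
          · exact Finset.min'_le _ a (by rw [hSeq]; exact haS)
          · have hmem := (Sset m x y').min'_mem hS'ne
            have hmem2 : (Sset m x y').min' hS'ne ∈ Sset m x y := by
              rw [← hSeq]; exact hmem
            exact (Sset m x y).min'_le _ hmem2
        have hpend' : p + 1 ≤ pend m x y' := by
          unfold pend
          rw [dif_pos hS'ne]
          apply Finset.le_max'
          rw [Finset.mem_filter, Finset.mem_Icc, ha'eq]
          refine ⟨⟨by omega, by omega⟩, ?_⟩
          rw [hy'out (p+1) (by omega), hy'run a (le_refl _) hap, htdef, if_pos hcase]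
        have hcards : (Sset m x y').card = (Sset m x y).card := by rw [hSeq]
        rw [hpend] at hmeas
        rw [hcards]
        have h3 : m - pend m x y' ≤ m - (p+1) := Nat.sub_le_sub_left hpend' m
        have hpm' : p < m := hcase.1
        generalize hK : (Sset m x y).card * (m+1) = K at hmeas ⊢
        omega
      · -- the minimum of S gets closed: S shrinks
        have ht4 : t = x a := by rw [htdef, if_neg hcase]
        have hsub2 : Sset m x y' ⊆ Sset m x y := by
          intro j hj
          by_cases h : a ≤ j ∧ j ≤ p
          · exact hrunS j h.1 h.2
          · rw [mem_Sset] at hj ⊢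
            rwa [hy'out j h] at hj
        have hanot : a ∉ Sset m x y' := by
          rw [mem_Sset]
          rintro ⟨-, hlt⟩
          rw [hy'run a (le_refl _) hap, ht4] at hlt
          exact lt_irrefl _ hlt
        have hclt : (Sset m x y').card < (Sset m x y).card :=
          Finset.card_lt_card ((Finset.ssubset_iff_of_subset hsub2).mpr ⟨a, haS, hanot⟩)
        have h2 : ((Sset m x y').card + 1) * (m+1) ≤ (Sset m x y).card * (m+1) :=
          Nat.mul_le_mul_right _ hclt
        rw [add_mul, one_mul] at h2
        have h3 : m - pend m x y' ≤ m := Nat.sub_le _ _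
        generalize hA : (Sset m x y').card * (m+1) = A at h2 ⊢
        generalize hB : (Sset m x y).card * (m+1) = B at h2 hmeas
        omega
    calc (∑ j ∈ Finset.Icc 1 m, R j (x j)) ≤ ∑ j ∈ Finset.Icc 1 m, R j (y' j) :=
          IH y' hy'mono hy'x hfinal
      _ ≤ ∑ j ∈ Finset.Icc 1 m, R j (y j) := hstep

end hyp4
noncomputable def pstart (m : ℕ) (x y : ℕ → ℝ) : ℕ :=
  if h : (Sset m y x).Nonempty then
    ((Finset.Icc 1 ((Sset m y x).max' h)).filter (fun j => y j = y ((Sset m y x).max' h))).min'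
      ⟨(Sset m y x).max' h, by
        refine Finset.mem_filter.2 ⟨Finset.mem_Icc.2 ⟨?_, le_refl _⟩, rfl⟩
        exact (mem_Sset.mp ((Sset m y x).max'_mem h)).1.1⟩
  else 0

lemma pstart_le (m : ℕ) (x y : ℕ → ℝ) : pstart m x y ≤ m := by
  unfold pstart
  split
  · next h =>
    have h1 := (mem_Sset.mp ((Sset m y x).max'_mem h)).1.2
    refine le_trans (Finset.min'_le _ _ ?_) h1
    refine Finset.mem_filter.2 ⟨Finset.mem_Icc.2 ⟨?_, le_refl _⟩, rfl⟩
    exact (mem_Sset.mp ((Sset m y x).max'_mem h)).1.1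
  · exact Nat.zero_le m

section hyp5
variable (m : ℕ) (R : ℕ → ℝ → ℝ) (L U : ℕ → ℕ → ℝ)
variable (hLU : ∀ a b, 1 ≤ a → a ≤ b → b ≤ m → L a b ≤ U a b)
variable (hmin : ∀ a b, 1 ≤ a → a ≤ b → b ≤ m → ∀ q : ℝ,
      (∀ r : ℝ, (∑ j ∈ Finset.Icc a b, R j q) ≤ ∑ j ∈ Finset.Icc a b, R j r) ↔
        q ∈ Set.Icc (L a b) (U a b))
variable (hanti : ∀ a b, 1 ≤ a → a ≤ b → b ≤ m →
      StrictAntiOn (fun q => ∑ j ∈ Finset.Icc a b, R j q) (Set.Iic (L a b)))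
variable (hmono : ∀ a b, 1 ≤ a → a ≤ b → b ≤ m →
      StrictMonoOn (fun q => ∑ j ∈ Finset.Icc a b, R j q) (Set.Ici (U a b)))
variable (x : ℕ → ℝ) (hx : MonotoneOn x (Set.Icc 1 m))

include hLU hmin hmono hx in
lemma lemB' (hL : ∀ a b, 1 ≤ a → a ≤ b → b ≤ m → (b = m ∨ x b < x (b+1)) → L a b ≤ x b) :
    ∀ N : ℕ, ∀ y : ℕ → ℝ, MonotoneOn y (Set.Icc 1 m) → (∀ j, 1 ≤ j → j ≤ m → x j ≤ y j) →
    (Sset m y x).card * (m+1) + pstart m x y ≤ N →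
    ∑ j ∈ Finset.Icc 1 m, R j (x j) ≤ ∑ j ∈ Finset.Icc 1 m, R j (y j) := by
  intro N
  induction N with
  | zero =>
    intro y hy hyx hmeas
    have h2 : (Sset m y x).card * (m+1) = 0 :=
      Nat.eq_zero_of_le_zero (le_trans (Nat.le_add_right _ _) hmeas)
    rcases Nat.mul_eq_zero.mp h2 with h3 | h3
    · exact le_of_eq (sum_eq_of_Sempty m R y x hyx (Finset.card_eq_zero.mp h3)).symm
    · omega
  | succ N IH =>
    intro y hy hyx hmeas
    by_cases hS : (Sset m y x).Nonempty
    swap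
    · exact le_of_eq (sum_eq_of_Sempty m R y x hyx (Finset.not_nonempty_iff_eq_empty.mp hS)).symm
    set b := (Sset m y x).max' hS with hbdef
    have hbS : b ∈ Sset m y x := (Sset m y x).max'_mem hS
    obtain ⟨⟨hb1, hbm⟩, hbx⟩ := mem_Sset.mp hbS
    set F := (Finset.Icc 1 b).filter (fun j => y j = y b) with hFdef
    have hbF : b ∈ F := by
      rw [hFdef, Finset.mem_filter, Finset.mem_Icc]; exact ⟨⟨hb1, le_refl _⟩, rfl⟩
    set q := F.min' ⟨b, hbF⟩ with hqdef
    have hqF : q ∈ F := F.min'_mem _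
    rw [hFdef, Finset.mem_filter, Finset.mem_Icc] at hqF
    obtain ⟨⟨hq1, hqb⟩, hyqb⟩ := hqF
    have hpstart : pstart m x y = q := by
      unfold pstart
      rw [dif_pos hS]
    have hrun : ∀ j, q ≤ j → j ≤ b → y j = y b := by
      intro j hj1 hj2
      have e1 : y q ≤ y j := hy (Set.mem_Icc.mpr ⟨hq1, by omega⟩)
        (Set.mem_Icc.mpr ⟨by omega, by omega⟩) hj1
      have e2 : y j ≤ y b := hy (Set.mem_Icc.mpr ⟨by omega, by omega⟩)
        (Set.mem_Icc.mpr ⟨hb1, hbm⟩) hj2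
      rw [hyqb] at e1; linarith
    have hrunS : ∀ j, q ≤ j → j ≤ b → j ∈ Sset m y x := by
      intro j hj1 hj2
      refine mem_Sset.mpr ⟨⟨by omega, by omega⟩, ?_⟩
      have e1 : x j ≤ x b := hx (Set.mem_Icc.mpr ⟨by omega, by omega⟩)
        (Set.mem_Icc.mpr ⟨hb1, hbm⟩) hj2
      rw [hrun j hj1 hj2]; linarith
    have hyq1 : 1 < q → y (q-1) < y b := by
      intro hq1'
      have e1 : y (q-1) ≤ y q := hy (Set.mem_Icc.mpr ⟨by omega, by omega⟩)
        (Set.mem_Icc.mpr ⟨hq1, by omega⟩) (by omega)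
      rcases lt_or_eq_of_le e1 with h | h
      · rw [hyqb] at h; exact h
      · exfalso
        have hmem : q - 1 ∈ F := by
          rw [hFdef, Finset.mem_filter, Finset.mem_Icc]
          exact ⟨⟨by omega, by omega⟩, by rw [h, hyqb]⟩
        have := Finset.min'_le F (q-1) hmem
        rw [← hqdef] at this; omega
    have gate : b = m ∨ x b < x (b+1) := by
      rcases eq_or_ne b m with h | h
      · exact Or.inl h
      · right
        have h2 : b + 1 ∉ Sset m y x := by
          intro hc
          have := (Sset m y x).le_max' _ hc
          rw [← hbdef] at this; omega
        have h3 : ¬ (x (b+1) < y (b+1)) := fun hc => h2 (mem_Sset.mpr ⟨⟨by omega, by omega⟩, hc⟩)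
        have h4 : y b ≤ y (b+1) := hy (Set.mem_Icc.mpr ⟨hb1, hbm⟩)
          (Set.mem_Icc.mpr ⟨by omega, by omega⟩) (by omega)
        have h5 : y (b+1) ≤ x (b+1) := not_lt.1 h3
        linarith
    have hLb : L q b ≤ x b := hL q b hq1 hqb hbm gate
    set t : ℝ := if 1 < q ∧ x b < y (q-1) then y (q-1) else x b with htdef
    have ht2 : x b ≤ t := by
      by_cases h : 1 < q ∧ x b < y (q-1)
      · rw [htdef, if_pos h]; exact le_of_lt h.2
      · rw [htdef, if_neg h]
    have ht1 : t < y b := by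
      by_cases h : 1 < q ∧ x b < y (q-1)
      · rw [htdef, if_pos h]; exact hyq1 h.1
      · rw [htdef, if_neg h]; exact hbx
    have ht3 : 1 < q → y (q-1) ≤ t := by
      intro hq1'
      by_cases h : 1 < q ∧ x b < y (q-1)
      · rw [htdef, if_pos h]
      · rw [htdef, if_neg h]
        push_neg at h
        exact h hq1'
    set y' : ℕ → ℝ := fun j => if q ≤ j ∧ j ≤ b then t else y j with hy'def
    have hy'run : ∀ j, q ≤ j → j ≤ b → y' j = t := by
      intro j h1 h2; rw [hy'def]; exact if_pos ⟨h1, h2⟩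
    have hy'out : ∀ j, ¬(q ≤ j ∧ j ≤ b) → y' j = y j := by
      intro j h; rw [hy'def]; exact if_neg h
    have hy'mono : MonotoneOn y' (Set.Icc 1 m) := by
      intro i hi j hj hij
      simp only [Set.mem_Icc] at hi hj
      by_cases hiI : q ≤ i ∧ i ≤ b <;> by_cases hjI : q ≤ j ∧ j ≤ b
      · rw [hy'run i hiI.1 hiI.2, hy'run j hjI.1 hjI.2]
      · have hjb : b < j := by omega
        rw [hy'run i hiI.1 hiI.2, hy'out j hjI]
        have e1 : y b ≤ y j := hy (Set.mem_Icc.mpr ⟨hb1, hbm⟩)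
          (Set.mem_Icc.mpr hj) (by omega)
        linarith
      · have hiq : i < q := by omega
        rw [hy'out i hiI, hy'run j hjI.1 hjI.2]
        have e1 : y i ≤ y (q-1) := hy (Set.mem_Icc.mpr hi)
          (Set.mem_Icc.mpr ⟨by omega, by omega⟩) (by omega)
        have := ht3 (by omega)
        linarith
      · rw [hy'out i hiI, hy'out j hjI]
        exact hy (Set.mem_Icc.mpr hi) (Set.mem_Icc.mpr hj) hij
    have hy'x : ∀ j, 1 ≤ j → j ≤ m → x j ≤ y' j := by
      intro j h1 h2
      by_cases h : q ≤ j ∧ j ≤ b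
      · rw [hy'run j h.1 h.2]
        exact le_trans (hx (Set.mem_Icc.mpr ⟨h1, h2⟩) (Set.mem_Icc.mpr ⟨hb1, hbm⟩) h.2) ht2
      · rw [hy'out j h]; exact hyx j h1 h2
    have hstep : (∑ j ∈ Finset.Icc 1 m, R j (y' j)) ≤ ∑ j ∈ Finset.Icc 1 m, R j (y j) := by
      have hsub : Finset.Icc q b ⊆ Finset.Icc 1 m := by
        intro j hj; rw [Finset.mem_Icc] at *; omega
      have hswap := Tswap m R y y' hsub (fun j _ hj2 =>
        hy'out j (by rwa [Finset.mem_Icc] at hj2))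
      have e1 : (∑ j ∈ Finset.Icc q b, R j (y j)) = fsum R q b (y b) := by
        refine Finset.sum_congr rfl fun j hj => ?_
        rw [Finset.mem_Icc] at hj; rw [hrun j hj.1 hj.2]
      have e2 : (∑ j ∈ Finset.Icc q b, R j (y' j)) = fsum R q b t := by
        refine Finset.sum_congr rfl fun j hj => ?_
        rw [Finset.mem_Icc] at hj; rw [hy'run j hj.1 hj.2]
      have e3 : fsum R q b t ≤ fsum R q b (y b) :=
        nondecr m R L U hLU hmin hmono hq1 hqb hbm (le_trans hLb ht2) (le_of_lt ht1)
      rw [e1, e2] at hswap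
      linarith
    have hfinal : (Sset m y' x).card * (m+1) + pstart m x y' ≤ N := by
      by_cases hcase : 1 < q ∧ x b < y (q-1)
      · -- run extends to the left: S unchanged, pstart shrinks
        have hSeq : Sset m y' x = Sset m y x := by
          ext j
          by_cases h : q ≤ j ∧ j ≤ b
          · have hjy : j ∈ Sset m y x := hrunS j h.1 h.2
            have hjy' : j ∈ Sset m y' x := by
              refine mem_Sset.mpr ⟨⟨by omega, by omega⟩, ?_⟩
              rw [hy'run j h.1 h.2, htdef, if_pos hcase]
              have e1 : x j ≤ x b := hx (Set.mem_Icc.mpr ⟨by omega, by omega⟩)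
                (Set.mem_Icc.mpr ⟨hb1, hbm⟩) h.2
              linarith [hcase.2]
            exact iff_of_true hjy' hjy
          · rw [mem_Sset, mem_Sset, hy'out j h]
        have hS'ne : (Sset m y' x).Nonempty := ⟨b, by rw [hSeq]; exact hbS⟩
        have hb'eq : (Sset m y' x).max' hS'ne = b := by
          apply le_antisymm
          · have hmem := (Sset m y' x).max'_mem hS'ne
            have hmem2 : (Sset m y' x).max' hS'ne ∈ Sset m y x := by
              rw [← hSeq]; exact hmem
            exact (Sset m y x).le_max' _ hmem2
          · exact Finset.le_max' _ b (by rw [hSeq]; exact hbS)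
        have hpstart' : pstart m x y' ≤ q - 1 := by
          unfold pstart
          rw [dif_pos hS'ne]
          apply Finset.min'_le
          rw [Finset.mem_filter, Finset.mem_Icc, hb'eq]
          refine ⟨⟨by omega, by omega⟩, ?_⟩
          rw [hy'out (q-1) (by omega), hy'run b hqb (le_refl _), htdef, if_pos hcase]
        have hcards : (Sset m y' x).card = (Sset m y x).card := by rw [hSeq]
        rw [hpstart] at hmeas
        rw [hcards]
        have hq1' : 1 < q := hcase.1
        generalize hK : (Sset m y x).card * (m+1) = K at hmeas ⊢
        omega
      · -- the maximum of S gets closed: S shrinks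
        have ht4 : t = x b := by rw [htdef, if_neg hcase]
        have hsub2 : Sset m y' x ⊆ Sset m y x := by
          intro j hj
          by_cases h : q ≤ j ∧ j ≤ b
          · exact hrunS j h.1 h.2
          · rw [mem_Sset] at hj ⊢
            rwa [hy'out j h] at hj
        have hbnot : b ∉ Sset m y' x := by
          rw [mem_Sset]
          rintro ⟨-, hlt⟩
          rw [hy'run b hqb (le_refl _), ht4] at hlt
          exact lt_irrefl _ hlt
        have hclt : (Sset m y' x).card < (Sset m y x).card :=
          Finset.card_lt_card ((Finset.ssubset_iff_of_subset hsub2).mpr ⟨b, hbS, hbnot⟩)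
        have h2 : ((Sset m y' x).card + 1) * (m+1) ≤ (Sset m y x).card * (m+1) :=
          Nat.mul_le_mul_right _ hclt
        rw [add_mul, one_mul] at h2
        have h3 : pstart m x y' ≤ m := pstart_le m x y'
        generalize hA : (Sset m y' x).card * (m+1) = A at h2 ⊢
        generalize hB : (Sset m y x).card * (m+1) = B at h2 hmeas
        omega
    calc (∑ j ∈ Finset.Icc 1 m, R j (x j)) ≤ ∑ j ∈ Finset.Icc 1 m, R j (y' j) :=
          IH y' hy'mono hy'x hfinal
      _ ≤ ∑ j ∈ Finset.Icc 1 m, R j (y j) := hstep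

end hyp5
/-- Characterization of minimizers of `T` over the isotone cone. -/
theorem stmt1 (m : ℕ) (hm : 1 ≤ m) (R : ℕ → ℝ → ℝ) (L U : ℕ → ℕ → ℝ)
    (hLU : ∀ a b, 1 ≤ a → a ≤ b → b ≤ m → L a b ≤ U a b)
    (hmin : ∀ a b, 1 ≤ a → a ≤ b → b ≤ m → ∀ q : ℝ,
      (∀ r : ℝ, (∑ j ∈ Finset.Icc a b, R j q) ≤ ∑ j ∈ Finset.Icc a b, R j r) ↔
        q ∈ Set.Icc (L a b) (U a b))
    (hanti : ∀ a b, 1 ≤ a → a ≤ b → b ≤ m →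
      StrictAntiOn (fun q => ∑ j ∈ Finset.Icc a b, R j q) (Set.Iic (L a b)))
    (hmono : ∀ a b, 1 ≤ a → a ≤ b → b ≤ m →
      StrictMonoOn (fun q => ∑ j ∈ Finset.Icc a b, R j q) (Set.Ici (U a b)))
    (x : ℕ → ℝ) (hx : MonotoneOn x (Set.Icc 1 m)) :
    (∀ y : ℕ → ℝ, MonotoneOn y (Set.Icc 1 m) →
        (∑ j ∈ Finset.Icc 1 m, R j (x j)) ≤ ∑ j ∈ Finset.Icc 1 m, R j (y j)) ↔
    (∀ a b, 1 ≤ a → a ≤ b → b ≤ m →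
        ((a = 1 ∨ x (a - 1) < x a) → x a ≤ U a b) ∧
        ((b = m ∨ x b < x (b + 1)) → L a b ≤ x b)) := by
  constructor
  · intro hopt a b ha hab hbm
    exact ⟨forwardU m R L U hLU hmin hanti hmono x hx hopt (b-a) a b ha hab hbm le_rfl,
           forwardL m R L U hLU hmin hanti hmono x hx hopt (b-a) a b ha hab hbm le_rfl⟩
  · intro hcond y hy
    have hUc : ∀ a b, 1 ≤ a → a ≤ b → b ≤ m → (a = 1 ∨ x (a-1) < x a) → x a ≤ U a b :=
      fun a b h1 h2 h3 g => (hcond a b h1 h2 h3).1 g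
    have hLc : ∀ a b, 1 ≤ a → a ≤ b → b ≤ m → (b = m ∨ x b < x (b+1)) → L a b ≤ x b :=
      fun a b h1 h2 h3 g => (hcond a b h1 h2 h3).2 g
    have hzm : MonotoneOn (fun j => min (x j) (y j)) (Set.Icc 1 m) := fun i hi j hj hij =>
      min_le_min (hx hi hj hij) (hy hi hj hij)
    have hwm : MonotoneOn (fun j => max (x j) (y j)) (Set.Icc 1 m) := fun i hi j hj hij =>
      max_le_max (hx hi hj hij) (hy hi hj hij)
    have h1 : (∑ j ∈ Finset.Icc 1 m, R j (x j))
        ≤ ∑ j ∈ Finset.Icc 1 m, R j (min (x j) (y j)) :=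
      lemB m R L U hLU hmin hanti x hx hUc _ _ hzm (fun j _ _ => min_le_left _ _) le_rfl
    have h2 : (∑ j ∈ Finset.Icc 1 m, R j (x j))
        ≤ ∑ j ∈ Finset.Icc 1 m, R j (max (x j) (y j)) :=
      lemB' m R L U hLU hmin hmono x hx hLc _ _ hwm (fun j _ _ => le_max_left _ _) le_rfl
    have h3 : (∑ j ∈ Finset.Icc 1 m, R j (min (x j) (y j)))
        + ∑ j ∈ Finset.Icc 1 m, R j (max (x j) (y j))
        = (∑ j ∈ Finset.Icc 1 m, R j (x j)) + ∑ j ∈ Finset.Icc 1 m, R j (y j) := by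
      rw [← Finset.sum_add_distrib, ← Finset.sum_add_distrib]
      refine Finset.sum_congr rfl fun j _ => ?_
      rcases le_total (x j) (y j) with h | h
      · rw [min_eq_left h, max_eq_right h]
      · rw [min_eq_right h, max_eq_left h]; ring
    linarith
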